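/- (Moment condition underlying the HetroGMM estimator of the second moment) Under the stated assumptions, for every t ∈ ℤ, E(φ²) · (E((Δy_t)²) + E(Δy_t Δy_{t−1})) = E((Δy_t)²) + 2 E(Δy_t Δy_{t−1}) + 2 E(Δy_t Δy_{t−2}) + E(Δy_t Δy_{t−3}). -/

import Mathlib

open MeasureTheory ProbabilityTheory Filter

/-- Index type for the joint independence assumption: `none` indexes the pair of
random coefficients `(φ, σ)` and `some ℓ` indexes the standardized error `ε_ℓ`. -/
abbrev HetAR1.Codomain : Option ℤ → Type
  | none => ℝ × ℝ
  | some _ => ℝ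

instance HetAR1.instMeasurableSpaceCodomain : ∀ i, MeasurableSpace (HetAR1.Codomain i)
  | none => inferInstanceAs (MeasurableSpace (ℝ × ℝ))
  | some _ => inferInstanceAs (MeasurableSpace ℝ)

/-- The family consisting of the pair `(φ, σ)` together with all the errors `ε_ℓ`. -/
def HetAR1.family {Ω : Type*} (φ σ : Ω → ℝ) (ε : ℤ → Ω → ℝ) :
    ∀ i : Option ℤ, Ω → HetAR1.Codomain i
  | none => fun ω => (φ ω, σ ω)
  | some ℓ => ε ℓ

/-- Coefficient of `ε (t - j)` in the truncated MA representation. -/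
def HetAR1.coeff : ℕ → ℝ → ℝ → ℝ
  | 0, _, s => s
  | (j+1), x, s => -(s * (1 - x) * x ^ j)

namespace HetAR1

lemma coeff_measurable (j : ℕ) : Measurable fun p : ℝ × ℝ => coeff j p.1 p.2 := by
  cases j with
  | zero => simpa [coeff] using measurable_snd
  | succ j => simp only [coeff]; fun_prop

lemma coeff_abs_le {x : ℝ} (s : ℝ) (hx : |x| ≤ 1) (j : ℕ) : |coeff j x s| ≤ 2 * |s| := by
  cases j with
  | zero => simp [coeff]; nlinarith [abs_nonneg s]
  | succ j =>
    have h1 : |1 - x| ≤ 2 := by rw [abs_le] at hx ⊢; constructor <;> linarith [hx.1, hx.2]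
    have h2 : |x ^ j| ≤ 1 := by rw [abs_pow]; exact pow_le_one₀ (abs_nonneg x) hx
    simp only [coeff, abs_neg, abs_mul]
    calc |s| * |1 - x| * |x ^ j| ≤ |s| * 2 * 1 := by
          apply mul_le_mul (mul_le_mul_of_nonneg_left h1 (abs_nonneg s)) h2 (abs_nonneg _)
          positivity
      _ = 2 * |s| := by ring

lemma coeff_succ (j : ℕ) (x s : ℝ) : coeff (j+1) x s = -(s * (1 - x) * x ^ j) := rfl

lemma comboA (x s : ℝ) (N : ℕ) :
    ((∑ j ∈ Finset.range (N+2), coeff j x s * coeff j x s) +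
      ∑ j ∈ Finset.range (N+1), coeff (j+1) x s * coeff j x s)
      = s^2 * (1 - (1-x) * x ^ (2*N+1)) := by
  induction N with
  | zero => simp [Finset.sum_range_succ, coeff]; ring
  | succ N ih =>
    have p1 : ∑ j ∈ Finset.range (N+1+2), coeff j x s * coeff j x s
        = (∑ j ∈ Finset.range (N+2), coeff j x s * coeff j x s)
          + coeff (N+2) x s * coeff (N+2) x s := by
      rw [show N+1+2 = (N+2)+1 by ring, Finset.sum_range_succ]
    have p2 : ∑ j ∈ Finset.range (N+1+1), coeff (j+1) x s * coeff j x s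
        = (∑ j ∈ Finset.range (N+1), coeff (j+1) x s * coeff j x s)
          + coeff (N+1+1) x s * coeff (N+1) x s := by
      rw [Finset.sum_range_succ]
    have v1 : coeff (N+2) x s = -(s * (1-x) * x ^ (N+1)) := rfl
    have v2 : coeff (N+1+1) x s = -(s * (1-x) * x ^ (N+1)) := rfl
    have v3 : coeff (N+1) x s = -(s * (1-x) * x ^ N) := rfl
    rw [p1, p2]; simp only [v1, v2, v3]
    linear_combination ih

lemma comboB (x s : ℝ) (N : ℕ) :
    ((∑ j ∈ Finset.range (N+4), coeff j x s * coeff j x s) +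
      2 * ∑ j ∈ Finset.range (N+3), coeff (j+1) x s * coeff j x s +
      2 * ∑ j ∈ Finset.range (N+2), coeff (j+2) x s * coeff j x s +
      ∑ j ∈ Finset.range (N+1), coeff (j+3) x s * coeff j x s)
      = s^2 * (x^2 - (1-x)*(1+x+x^2) * x ^ (2*N+3)) := by
  induction N with
  | zero =>
    simp [Finset.sum_range_succ, coeff]; ring
  | succ N ih =>
    have p1 : ∑ j ∈ Finset.range (N+1+4), coeff j x s * coeff j x s
        = (∑ j ∈ Finset.range (N+4), coeff j x s * coeff j x s)
          + coeff (N+4) x s * coeff (N+4) x s := by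
      rw [show N+1+4 = (N+4)+1 by ring, Finset.sum_range_succ]
    have p2 : ∑ j ∈ Finset.range (N+1+3), coeff (j+1) x s * coeff j x s
        = (∑ j ∈ Finset.range (N+3), coeff (j+1) x s * coeff j x s)
          + coeff (N+3+1) x s * coeff (N+3) x s := by
      rw [show N+1+3 = (N+3)+1 by ring, Finset.sum_range_succ]
    have p3 : ∑ j ∈ Finset.range (N+1+2), coeff (j+2) x s * coeff j x s
        = (∑ j ∈ Finset.range (N+2), coeff (j+2) x s * coeff j x s)
          + coeff (N+2+2) x s * coeff (N+2) x s := by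
      rw [show N+1+2 = (N+2)+1 by ring, Finset.sum_range_succ]
    have p4 : ∑ j ∈ Finset.range (N+1+1), coeff (j+3) x s * coeff j x s
        = (∑ j ∈ Finset.range (N+1), coeff (j+3) x s * coeff j x s)
          + coeff (N+1+3) x s * coeff (N+1) x s := by
      rw [Finset.sum_range_succ]
    have v1 : coeff (N+1) x s = -(s * (1-x) * x ^ N) := rfl
    have v2 : coeff (N+2) x s = -(s * (1-x) * x ^ (N+1)) := rfl
    have v3 : coeff (N+3) x s = -(s * (1-x) * x ^ (N+2)) := rfl
    have v4 : coeff (N+4) x s = -(s * (1-x) * x ^ (N+3)) := rfl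
    have v5 : coeff (N+3+1) x s = -(s * (1-x) * x ^ (N+3)) := rfl
    have v6 : coeff (N+2+2) x s = -(s * (1-x) * x ^ (N+3)) := rfl
    have v7 : coeff (N+1+3) x s = -(s * (1-x) * x ^ (N+3)) := rfl
    rw [p1, p2, p3, p4]; simp only [v1, v2, v3, v4, v5, v6, v7]
    linear_combination ih

end HetAR1

lemma HetAR1.iIndepFun_congr {Ω ι : Type*} [MeasurableSpace Ω] {μ : Measure Ω}
    {β : ι → Type*} {m : ∀ i, MeasurableSpace (β i)} {f g : ∀ i, Ω → β i}
    (h : iIndepFun (m := m) f μ) (hfg : ∀ i, f i =ᵐ[μ] g i) : iIndepFun (m := m) g μ := by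
  rw [iIndepFun_iff_measure_inter_preimage_eq_mul] at h ⊢
  intro S sets H
  have hae : ∀ i : ι, f i ⁻¹' sets i =ᵐ[μ] g i ⁻¹' sets i := by
    intro i
    exact eventuallyEq_set.2 ((hfg i).mono fun ω hω => by
      simp only [Set.mem_preimage, hω])
  have h1 : μ (⋂ i ∈ S, g i ⁻¹' sets i) = μ (⋂ i ∈ S, f i ⁻¹' sets i) := by
    apply measure_congr
    apply eventuallyEq_set.2
    have : ∀ᵐ ω ∂μ, ∀ i ∈ S, (ω ∈ f i ⁻¹' sets i ↔ ω ∈ g i ⁻¹' sets i) :=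
      (Filter.eventually_all_finset S).2 fun i _ => eventuallyEq_set.1 (hae i)
    exact this.mono fun ω hω => by
      simp only [Set.mem_iInter]
      exact ⟨fun hh i hi => (hω i hi).mpr (hh i hi), fun hh i hi => (hω i hi).mp (hh i hi)⟩
  rw [h1, h S H]
  exact Finset.prod_congr rfl fun i _ => measure_congr (hae i)

/-- (Moment condition underlying the HetroGMM estimator of the second moment)
For every `t ∈ ℤ`, `E(φ²) (E((Δy_t)²) + E(Δy_t Δy_{t−1}))
  = E((Δy_t)²) + 2 E(Δy_t Δy_{t−1}) + 2 E(Δy_t Δy_{t−2}) + E(Δy_t Δy_{t−3})`. -/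
theorem hetroGMM_moment_condition_second
    {Ω : Type*} [MeasurableSpace Ω] (P : Measure Ω) [IsProbabilityMeasure P]
    (φ σ : Ω → ℝ) (ε : ℤ → Ω → ℝ) (ε₀ : ℝ) (hε₀ : 0 < ε₀)
    (hφm : Measurable φ) (hφbd : ∀ᵐ ω ∂P, -1 + ε₀ ≤ φ ω ∧ φ ω ≤ 1)
    (hσm : Measurable σ) (hσ0 : ∀ ω, 0 ≤ σ ω)
    (hσ2 : Integrable (fun ω => (σ ω) ^ 2) P)
    (hε2 : ∀ ℓ : ℤ, MemLp (ε ℓ) 2 P)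
    (hεmean : ∀ ℓ : ℤ, ∫ ω, ε ℓ ω ∂P = 0)
    (hεvar : ∀ ℓ : ℤ, ∫ ω, (ε ℓ ω) ^ 2 ∂P = 1)
    (hindep : iIndepFun (HetAR1.family φ σ ε) P)
    (hφσ : IndepFun φ σ P)
    (Δy : ℤ → Ω → ℝ)
    (hΔ2 : ∀ t : ℤ, MemLp (Δy t) 2 P)
    (hΔrep : ∀ t : ℤ, ∀ᵐ ω ∂P,
      (Summable fun ℓ : ℕ => |φ ω ^ ℓ * ε (t - ((ℓ : ℤ) + 1)) ω|) ∧
      Δy t ω = σ ω * (ε t ω -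
        (1 - φ ω) * ∑' ℓ : ℕ, φ ω ^ ℓ * ε (t - ((ℓ : ℤ) + 1)) ω))
    (hΔL2 : ∀ t : ℤ, Tendsto (fun M : ℕ =>
        eLpNorm (fun ω => σ ω * (ε t ω -
          (1 - φ ω) * ∑ ℓ ∈ Finset.range M, φ ω ^ ℓ * ε (t - ((ℓ : ℤ) + 1)) ω)
          - Δy t ω) 2 P)
      atTop (nhds 0)) :
    ∀ t : ℤ,
      (∫ ω, (φ ω) ^ 2 ∂P) *
          ((∫ ω, (Δy t ω) ^ 2 ∂P) + ∫ ω, Δy t ω * Δy (t - 1) ω ∂P) =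
        (∫ ω, (Δy t ω) ^ 2 ∂P) + 2 * (∫ ω, Δy t ω * Δy (t - 1) ω ∂P) +
          2 * (∫ ω, Δy t ω * Δy (t - 2) ω ∂P) + ∫ ω, Δy t ω * Δy (t - 3) ω ∂P := by
  classical
  intro t
  open HetAR1 in
  -- measurable modification of the noise
  obtain ⟨ε', hε'm, hε'ae⟩ : ∃ ε' : ℤ → Ω → ℝ, (∀ ℓ, Measurable (ε' ℓ)) ∧
      ∀ ℓ, ε ℓ =ᵐ[P] ε' ℓ :=
    ⟨fun ℓ => (hε2 ℓ).1.mk (ε ℓ),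
      fun ℓ => (hε2 ℓ).1.stronglyMeasurable_mk.measurable, fun ℓ => (hε2 ℓ).1.ae_eq_mk⟩
  have hε'2 : ∀ ℓ, MemLp (ε' ℓ) 2 P := fun ℓ => (hε2 ℓ).ae_eq (hε'ae ℓ)
  have hε'mean : ∀ ℓ, ∫ ω, ε' ℓ ω ∂P = 0 :=
    fun ℓ => (integral_congr_ae (hε'ae ℓ).symm).trans (hεmean ℓ)
  have hε'var : ∀ ℓ, ∫ ω, (ε' ℓ ω) ^ 2 ∂P = 1 :=
    fun ℓ => (integral_congr_ae (((hε'ae ℓ).symm).mono fun ω h => by rw [h])).trans (hεvar ℓ)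
  have hindep' : iIndepFun (HetAR1.family φ σ ε') P := by
    refine HetAR1.iIndepFun_congr hindep fun i => ?_
    cases i with
    | none => exact Filter.EventuallyEq.rfl
    | some ℓ => exact hε'ae ℓ
  have hmeas' : ∀ i, Measurable (HetAR1.family φ σ ε' i) := by
    intro i
    cases i with
    | none => exact hφm.prodMk hσm
    | some ℓ => exact hε'm ℓ
  -- the truncated processes and coefficients
  set W : ℤ → ℕ → Ω → ℝ := fun u M ω => σ ω * (ε' u ω -
    (1 - φ ω) * ∑ ℓ ∈ Finset.range M, φ ω ^ ℓ * ε' (u - ((ℓ:ℤ)+1)) ω) with hWdef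
  set C : ℕ → Ω → ℝ := fun j ω => HetAR1.coeff j (φ ω) (σ ω) with hCdef
  have hφabs : ∀ᵐ ω ∂P, |φ ω| ≤ 1 :=
    hφbd.mono fun ω h => abs_le.2 ⟨by linarith [h.1, hε₀.le], h.2⟩
  have hCm : ∀ j, Measurable (C j) :=
    fun j => (HetAR1.coeff_measurable j).comp (hφm.prodMk hσm)
  -- L² convergence of the truncations with the modified noise
  have hεall : ∀ᵐ ω ∂P, ∀ ℓ : ℤ, ε ℓ ω = ε' ℓ ω := ae_all_iff.2 hε'ae
  have hWL2 : ∀ u : ℤ, Tendsto (fun M => eLpNorm (fun ω => W u M ω - Δy u ω) 2 P)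
      atTop (nhds 0) := by
    intro u
    refine (hΔL2 u).congr fun M => ?_
    refine eLpNorm_congr_ae ?_
    filter_upwards [hεall] with ω h
    simp only [hWdef]
    have hs : ∑ ℓ ∈ Finset.range M, φ ω ^ ℓ * ε (u - ((ℓ:ℤ)+1)) ω
        = ∑ ℓ ∈ Finset.range M, φ ω ^ ℓ * ε' (u - ((ℓ:ℤ)+1)) ω :=
      Finset.sum_congr rfl fun ℓ _ => by rw [h (u - ((ℓ:ℤ)+1))]
    rw [h u, hs]
  -- integrability of coefficient products
  have hCbd : ∀ j, ∀ᵐ ω ∂P, |C j ω| ≤ 2 * |σ ω| := by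
    intro j
    filter_upwards [hφabs] with ω h
    exact HetAR1.coeff_abs_le (σ ω) h j
  have hCCint : ∀ j j', Integrable (fun ω => C j ω * C j' ω) P := by
    intro j j'
    refine Integrable.mono' (hσ2.const_mul 4) ((hCm j).mul (hCm j')).aestronglyMeasurable ?_
    filter_upwards [hCbd j, hCbd j'] with ω h1 h2
    rw [Real.norm_eq_abs, abs_mul]
    nlinarith [abs_nonneg (C j ω), abs_nonneg (C j' ω), abs_nonneg (σ ω), sq_abs (σ ω)]
  -- independence of the coefficient pair from products of noise
  have hpair_indep : ∀ a b : ℤ, IndepFun (fun ω => (φ ω, σ ω))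
      (fun ω => ε' a ω * ε' b ω) P := by
    intro a b
    by_cases hab : a = b
    · subst hab
      have h0 : IndepFun (HetAR1.family φ σ ε' none) (HetAR1.family φ σ ε' (some a)) P :=
        hindep'.indepFun (by simp)
      exact h0.comp measurable_id (measurable_id.mul measurable_id)
    · have h0 : IndepFun (fun ω => (HetAR1.family φ σ ε' (some a) ω,
          HetAR1.family φ σ ε' (some b) ω)) (HetAR1.family φ σ ε' none) P :=
        hindep'.indepFun_prodMk hmeas' (some a) (some b) none (by simp) (by simp)
      exact h0.symm.comp measurable_id (measurable_fst.mul measurable_snd)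
  have hεab_int : ∀ a b : ℤ, Integrable (fun ω => ε' a ω * ε' b ω) P := by
    intro a b
    by_cases hab : a = b
    · subst hab
      simpa [sq] using (hε'2 a).integrable_sq
    · have hind : IndepFun (ε' a) (ε' b) P :=
        hindep'.indepFun (show (some a : Option ℤ) ≠ some b by simpa using hab)
      exact hind.integrable_mul ((hε'2 a).integrable one_le_two)
        ((hε'2 b).integrable one_le_two)
  have hεab_val : ∀ a b : ℤ, ∫ ω, ε' a ω * ε' b ω ∂P = if a = b then 1 else 0 := by
    intro a b
    by_cases hab : a = b
    · subst hab
      rw [if_pos rfl, ← hε'var a]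
      exact integral_congr_ae (Filter.Eventually.of_forall fun ω => by simp [sq])
    · rw [if_neg hab]
      have hind : IndepFun (ε' a) (ε' b) P :=
        hindep'.indepFun (show (some a : Option ℤ) ≠ some b by simpa using hab)
      have h1 := hind.integral_fun_mul_eq_mul_integral ((hε'2 a).integrable one_le_two).aestronglyMeasurable
        ((hε'2 b).integrable one_le_two).aestronglyMeasurable
      have h2 : ∫ ω, ε' a ω * ε' b ω ∂P = (∫ ω, ε' a ω ∂P) * ∫ ω, ε' b ω ∂P := h1
      rw [h2, hε'mean a, hε'mean b, mul_zero]
  have hCC_eps_indep : ∀ (j j' : ℕ) (a b : ℤ),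
      IndepFun (fun ω => C j ω * C j' ω) (fun ω => ε' a ω * ε' b ω) P := by
    intro j j' a b
    exact (hpair_indep a b).comp
      ((HetAR1.coeff_measurable j).mul (HetAR1.coeff_measurable j')) measurable_id
  have hterm_int : ∀ (j j' : ℕ) (a b : ℤ),
      Integrable (fun ω => (C j ω * C j' ω) * (ε' a ω * ε' b ω)) P := by
    intro j j' a b
    exact (hCC_eps_indep j j' a b).integrable_mul (hCCint j j') (hεab_int a b)
  have hterm_val : ∀ (j j' : ℕ) (a b : ℤ),
      ∫ ω, (C j ω * C j' ω) * (ε' a ω * ε' b ω) ∂P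
        = if a = b then ∫ ω, C j ω * C j' ω ∂P else 0 := by
    intro j j' a b
    have h1 := (hCC_eps_indep j j' a b).integral_fun_mul_eq_mul_integral
      (hCCint j j').aestronglyMeasurable (hεab_int a b).aestronglyMeasurable
    have h2 : ∫ ω, (C j ω * C j' ω) * (ε' a ω * ε' b ω) ∂P
        = (∫ ω, C j ω * C j' ω ∂P) * ∫ ω, ε' a ω * ε' b ω ∂P := h1
    rw [h2, hεab_val a b]
    split_ifs <;> simp
  -- the truncation as a finite sum
  have hWsum : ∀ (u : ℤ) (M : ℕ) (ω : Ω),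
      W u M ω = ∑ j ∈ Finset.range (M+1), C j ω * ε' (u - (j:ℤ)) ω := by
    intro u M ω
    simp only [hWdef, hCdef]
    rw [Finset.sum_range_succ']
    simp only [HetAR1.coeff, Nat.cast_add, Nat.cast_one]
    have hc : ∀ i ∈ Finset.range M,
        -(σ ω * (1 - φ ω) * φ ω ^ i) * ε' (u - ((i:ℤ) + 1)) ω
          = -((σ ω * (1 - φ ω)) * (φ ω ^ i * ε' (u - ((i:ℤ) + 1)) ω)) :=
      fun i _ => by ring
    rw [Finset.sum_congr rfl hc, Finset.sum_neg_distrib, ← Finset.mul_sum]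
    simp only [Nat.cast_zero, sub_zero]
    ring
  -- square-integrability of the truncations
  have hCsq_int : ∀ j : ℕ, Integrable (fun ω => (C j ω) ^ 2) P := by
    intro j
    refine Integrable.mono' (hσ2.const_mul 4) (((hCm j).pow_const 2).aestronglyMeasurable) ?_
    filter_upwards [hCbd j] with ω h1
    rw [Real.norm_eq_abs, abs_pow]
    nlinarith [abs_nonneg (C j ω), abs_nonneg (σ ω), sq_abs (σ ω), sq_abs (C j ω)]
  have hW2 : ∀ (u : ℤ) (M : ℕ), MemLp (W u M) 2 P := by
    intro u M
    have hsum : MemLp (fun ω => ∑ j ∈ Finset.range (M+1), C j ω * ε' (u - (j:ℤ)) ω) 2 P := by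
      apply memLp_finset_sum
      intro j _
      have hmeas : AEStronglyMeasurable (fun ω => C j ω * ε' (u - (j:ℤ)) ω) P :=
        ((hCm j).mul (hε'm _)).aestronglyMeasurable
      rw [memLp_two_iff_integrable_sq hmeas]
      have heq : (fun ω => (C j ω * ε' (u - (j:ℤ)) ω) ^ 2)
          = fun ω => (C j ω) ^ 2 * (ε' (u - (j:ℤ)) ω) ^ 2 := funext fun ω => by ring
      rw [heq]
      have hind : IndepFun (fun ω => (φ ω, σ ω)) (ε' (u - (j:ℤ))) P :=
        hindep'.indepFun (show (none : Option ℤ) ≠ some (u - (j:ℤ)) by simp)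
      have hind2 : IndepFun (fun ω => (C j ω) ^ 2) (fun ω => (ε' (u - (j:ℤ)) ω) ^ 2) P :=
        hind.comp ((HetAR1.coeff_measurable j).pow_const 2) (measurable_id.pow_const 2)
      exact hind2.integrable_mul (hCsq_int j) (hε'2 _).integrable_sq
    exact hsum.ae_eq (Filter.Eventually.of_forall fun ω => (hWsum u M ω).symm)
  -- expansion of second moments of truncations
  have hint_WW : ∀ (k M : ℕ), k ≤ M →
      ∫ ω, W t M ω * W (t - (k:ℤ)) M ω ∂P
        = ∑ j ∈ Finset.range (M+1-k), ∫ ω, C (j+k) ω * C j ω ∂P := by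
    intro k M hk
    have hexp : (fun ω => W t M ω * W (t - (k:ℤ)) M ω)
        = fun ω => ∑ j ∈ Finset.range (M+1), ∑ j' ∈ Finset.range (M+1),
            (C j ω * C j' ω) * (ε' (t - (j:ℤ)) ω * ε' ((t - (k:ℤ)) - (j':ℤ)) ω) := by
      funext ω
      rw [hWsum, hWsum, Finset.sum_mul_sum]
      exact Finset.sum_congr rfl fun j _ => Finset.sum_congr rfl fun j' _ => by ring
    calc ∫ ω, W t M ω * W (t - (k:ℤ)) M ω ∂P
        = ∫ ω, ∑ j ∈ Finset.range (M+1), ∑ j' ∈ Finset.range (M+1),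
            (C j ω * C j' ω) * (ε' (t - (j:ℤ)) ω * ε' ((t - (k:ℤ)) - (j':ℤ)) ω) ∂P := by
          rw [hexp]
      _ = ∑ j ∈ Finset.range (M+1), ∑ j' ∈ Finset.range (M+1),
            ∫ ω, (C j ω * C j' ω) * (ε' (t - (j:ℤ)) ω * ε' ((t - (k:ℤ)) - (j':ℤ)) ω) ∂P := by
          rw [integral_finset_sum _ (fun j _ =>
            integrable_finset_sum _ (fun j' _ => hterm_int j j' _ _))]
          exact Finset.sum_congr rfl fun j _ =>
            integral_finset_sum _ (fun j' _ => hterm_int j j' _ _)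
      _ = ∑ j ∈ Finset.range (M+1), ∑ j' ∈ Finset.range (M+1),
            (if (t - (j:ℤ)) = ((t - (k:ℤ)) - (j':ℤ)) then ∫ ω, C j ω * C j' ω ∂P else 0) :=
          Finset.sum_congr rfl fun j _ => Finset.sum_congr rfl fun j' _ => hterm_val j j' _ _
      _ = ∑ j' ∈ Finset.range (M+1), ∑ j ∈ Finset.range (M+1),
            (if j = j' + k then ∫ ω, C j ω * C j' ω ∂P else 0) := by
          rw [Finset.sum_comm]
          exact Finset.sum_congr rfl fun j' _ => Finset.sum_congr rfl fun j _ =>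
            if_congr (by constructor <;> intro h <;> omega) rfl rfl
      _ = ∑ j' ∈ Finset.range (M+1),
            (if j' + k ∈ Finset.range (M+1) then ∫ ω, C (j'+k) ω * C j' ω ∂P else 0) :=
          Finset.sum_congr rfl fun j' _ => Finset.sum_ite_eq' (Finset.range (M+1)) (j'+k) _
      _ = ∑ j ∈ Finset.range (M+1-k), ∫ ω, C (j+k) ω * C j ω ∂P := by
          rw [← Finset.sum_subset (Finset.range_subset_range.2 (show M+1-k ≤ M+1 by omega))
            (fun x _ hx => by
              rw [if_neg]
              simp only [Finset.mem_range] at *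
              omega)]
          exact Finset.sum_congr rfl fun j hj => by
            rw [if_pos (Finset.mem_range.2 (by simp only [Finset.mem_range] at hj; omega))]
  -- convergence of truncated second moments to the true ones
  have hkey : ∀ (f g : Ω → ℝ) (hf : MemLp f 2 P) (hg : MemLp g 2 P),
      (inner ℝ (hf.toLp f) (hg.toLp g) : ℝ) = ∫ ω, f ω * g ω ∂P := by
    intro f g hf hg
    rw [MeasureTheory.L2.inner_def]
    refine integral_congr_ae ?_
    filter_upwards [hf.coeFn_toLp, hg.coeFn_toLp] with ω h1 h2
    rw [h1, h2, RCLike.inner_apply]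
    simp [mul_comm]
  have hconv : ∀ u s : ℤ, Tendsto (fun M => ∫ ω, W u M ω * W s M ω ∂P)
      atTop (nhds (∫ ω, Δy u ω * Δy s ω ∂P)) := by
    intro u s
    have htoLp : ∀ v : ℤ, Tendsto (fun M => (hW2 v M).toLp (W v M)) atTop
        (nhds ((hΔ2 v).toLp (Δy v))) := by
      intro v
      rw [tendsto_iff_norm_sub_tendsto_zero]
      have hnorm : ∀ M, ‖(hW2 v M).toLp (W v M) - (hΔ2 v).toLp (Δy v)‖
          = (eLpNorm (fun ω => W v M ω - Δy v ω) 2 P).toReal := by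
        intro M
        rw [← MemLp.toLp_sub, Lp.norm_toLp]
        rfl
      have h1 : Tendsto (fun M => (eLpNorm (fun ω => W v M ω - Δy v ω) 2 P).toReal)
          atTop (nhds 0) := by
        have := (ENNReal.tendsto_toReal ENNReal.zero_ne_top).comp (hWL2 v)
        simpa [Function.comp_def] using this
      exact h1.congr fun M => (hnorm M).symm
    have hinner := Filter.Tendsto.inner (𝕜 := ℝ) (htoLp u) (htoLp s)
    rw [hkey _ _ (hΔ2 u) (hΔ2 s)] at hinner
    exact hinner.congr fun M => hkey _ _ (hW2 u M) (hW2 s M)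
  -- vanishing remainder integrals
  have hremI : ∀ (r : ℝ → ℝ), Measurable r → (∀ x, |x| ≤ 1 → |r x| ≤ 4) → ∀ e : ℕ,
      Integrable (fun ω => σ ω ^ 2 * ((1 - φ ω) * r (φ ω) * φ ω ^ e)) P := by
    intro r hrm hrb e
    refine Integrable.mono' (hσ2.const_mul 8)
      ((hσm.pow_const 2).mul (((measurable_const.sub hφm).mul
        (hrm.comp hφm)).mul (hφm.pow_const e))).aestronglyMeasurable ?_
    filter_upwards [hφabs] with ω h
    have b1 : |1 - φ ω| ≤ 2 := by rw [abs_le] at h ⊢; constructor <;> linarith [h.1, h.2]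
    have b2 : |r (φ ω)| ≤ 4 := hrb _ h
    have b3 : |φ ω| ^ e ≤ 1 := pow_le_one₀ (abs_nonneg _) h
    rw [Real.norm_eq_abs, abs_mul, abs_mul, abs_mul, abs_pow, abs_pow, sq_abs]
    have hb : |1 - φ ω| * |r (φ ω)| * |φ ω| ^ e ≤ 8 := by
      have hh1 : |1 - φ ω| * |r (φ ω)| ≤ 2 * 4 :=
        mul_le_mul b1 b2 (abs_nonneg _) (by norm_num)
      have hh2 : (|1 - φ ω| * |r (φ ω)|) * (|φ ω| ^ e) ≤ (2*4) * 1 :=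
        mul_le_mul hh1 b3 (pow_nonneg (abs_nonneg _) e) (by norm_num)
      linarith
    linarith [mul_le_mul_of_nonneg_left hb (sq_nonneg (σ ω))]
  have hrem : ∀ (r : ℝ → ℝ), Measurable r → (∀ x, |x| ≤ 1 → |r x| ≤ 4) → ∀ c : ℕ,
      Tendsto (fun N => ∫ ω, σ ω ^ 2 * ((1 - φ ω) * r (φ ω) * φ ω ^ (2*N+c)) ∂P)
        atTop (nhds 0) := by
    intro r hrm hrb c
    have hdct := MeasureTheory.tendsto_integral_of_dominated_convergence
      (F := fun N ω => σ ω ^ 2 * ((1 - φ ω) * r (φ ω) * φ ω ^ (2*N+c)))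
      (f := fun _ => (0:ℝ)) (bound := fun ω => 8 * σ ω ^ 2)
      (fun N => ((hσm.pow_const 2).mul (((measurable_const.sub hφm).mul
        (hrm.comp hφm)).mul (hφm.pow_const _))).aestronglyMeasurable)
      (hσ2.const_mul 8)
      (fun N => by
        filter_upwards [hφabs] with ω h
        have b1 : |1 - φ ω| ≤ 2 := by rw [abs_le] at h ⊢; constructor <;> linarith [h.1, h.2]
        have b2 : |r (φ ω)| ≤ 4 := hrb _ h
        have b3 : |φ ω| ^ (2*N+c) ≤ 1 := pow_le_one₀ (abs_nonneg _) h
        rw [Real.norm_eq_abs, abs_mul, abs_mul, abs_mul, abs_pow, abs_pow, sq_abs]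
        have hb : |1 - φ ω| * |r (φ ω)| * |φ ω| ^ (2*N+c) ≤ 8 := by
          have hh1 : |1 - φ ω| * |r (φ ω)| ≤ 2 * 4 :=
            mul_le_mul b1 b2 (abs_nonneg _) (by norm_num)
          have hh2 : (|1 - φ ω| * |r (φ ω)|) * (|φ ω| ^ (2*N+c)) ≤ (2*4) * 1 :=
            mul_le_mul hh1 b3 (pow_nonneg (abs_nonneg _) _) (by norm_num)
          linarith
        linarith [mul_le_mul_of_nonneg_left hb (sq_nonneg (σ ω))])
      (by
        filter_upwards [hφbd] with ω h
        rcases eq_or_lt_of_le h.2 with h1 | h1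
        · have hz : ∀ N : ℕ, σ ω ^ 2 * ((1 - φ ω) * r (φ ω) * φ ω ^ (2*N+c)) = 0 :=
            fun N => by rw [← h1]; ring
          exact Tendsto.congr (fun N => (hz N).symm) tendsto_const_nhds
        · have habs : |φ ω| < 1 := abs_lt.2 ⟨by linarith [h.1], h1⟩
          have h2 : Tendsto (fun N : ℕ => φ ω ^ (2*N+c)) atTop (nhds 0) := by
            have hp := tendsto_pow_atTop_nhds_zero_of_abs_lt_one habs
            exact hp.comp (tendsto_atTop_mono (fun N => by simp only [id_eq]; omega) tendsto_id)
          have h3 := h2.const_mul (σ ω ^ 2 * ((1 - φ ω) * r (φ ω)))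
          rw [mul_zero] at h3
          exact h3.congr fun N => by ring)
    simpa using hdct
  -- the two combination identities in the limit
  have hγA : (∫ ω, Δy t ω * Δy t ω ∂P) + (∫ ω, Δy t ω * Δy (t-1) ω ∂P)
      = ∫ ω, σ ω ^ 2 ∂P := by
    have heq : ∀ N : ℕ, (∫ ω, W t (N+3) ω * W t (N+3) ω ∂P)
        + (∫ ω, W t (N+3) ω * W (t-1) (N+3) ω ∂P)
        = ∫ ω, σ ω ^ 2 * (1 - (1-φ ω) * φ ω ^ (2*N+5)) ∂P := by
      intro N
      have e0 := hint_WW 0 (N+3) (by omega)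
      have e1 := hint_WW 1 (N+3) (by omega)
      simp only [Nat.cast_zero, sub_zero, add_zero, Nat.cast_one] at e0 e1
      rw [e0, e1, show N+3+1-0 = N+2+2 by omega, show N+3+1-1 = N+2+1 by omega]
      rw [← integral_finset_sum _ (fun j _ => hCCint j j),
        ← integral_finset_sum _ (fun j _ => hCCint (j+1) j),
        ← integral_add (integrable_finset_sum _ (fun j _ => hCCint j j))
          (integrable_finset_sum _ (fun j _ => hCCint (j+1) j))]
      refine integral_congr_ae (Filter.Eventually.of_forall fun ω => ?_)
      have hA := HetAR1.comboA (φ ω) (σ ω) (N+2)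
      simp only [hCdef]
      rw [show 2*N+5 = 2*(N+2)+1 by ring]
      exact hA
    have hlhs : Tendsto (fun N : ℕ => (∫ ω, W t (N+3) ω * W t (N+3) ω ∂P)
        + ∫ ω, W t (N+3) ω * W (t-1) (N+3) ω ∂P) atTop
        (nhds ((∫ ω, Δy t ω * Δy t ω ∂P) + ∫ ω, Δy t ω * Δy (t-1) ω ∂P)) :=
      ((hconv t t).comp (tendsto_add_atTop_nat 3)).add
        ((hconv t (t-1)).comp (tendsto_add_atTop_nat 3))
    have hrhs : Tendsto (fun N : ℕ => ∫ ω, σ ω ^ 2 * (1 - (1-φ ω) * φ ω ^ (2*N+5)) ∂P)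
        atTop (nhds (∫ ω, σ ω ^ 2 ∂P)) := by
      have hsplit : ∀ N : ℕ, ∫ ω, σ ω ^ 2 * (1 - (1-φ ω) * φ ω ^ (2*N+5)) ∂P
          = (∫ ω, σ ω ^ 2 ∂P)
            - ∫ ω, σ ω ^ 2 * ((1-φ ω) * (fun _ => (1:ℝ)) (φ ω) * φ ω ^ (2*N+5)) ∂P := by
        intro N
        rw [← integral_sub hσ2 (hremI (fun _ => 1) measurable_const
          (fun x _ => by norm_num) _)]
        exact integral_congr_ae (Filter.Eventually.of_forall fun ω => by ring)
      have h0 := hrem (fun _ => (1:ℝ)) measurable_const (fun x _ => by norm_num) 5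
      have h1 := (tendsto_const_nhds (x := ∫ ω, σ ω ^ 2 ∂P) (f := atTop)).sub h0
      rw [sub_zero] at h1
      exact h1.congr fun N => (hsplit N).symm
    exact tendsto_nhds_unique hlhs (hrhs.congr fun N => (heq N).symm)
  have hγB : (∫ ω, Δy t ω * Δy t ω ∂P) + 2 * (∫ ω, Δy t ω * Δy (t-1) ω ∂P)
      + 2 * (∫ ω, Δy t ω * Δy (t-2) ω ∂P) + (∫ ω, Δy t ω * Δy (t-3) ω ∂P)
      = ∫ ω, σ ω ^ 2 * φ ω ^ 2 ∂P := by
    have heq : ∀ N : ℕ, (∫ ω, W t (N+3) ω * W t (N+3) ω ∂P)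
        + 2 * (∫ ω, W t (N+3) ω * W (t-1) (N+3) ω ∂P)
        + 2 * (∫ ω, W t (N+3) ω * W (t-2) (N+3) ω ∂P)
        + (∫ ω, W t (N+3) ω * W (t-3) (N+3) ω ∂P)
        = ∫ ω, σ ω ^ 2 * (φ ω ^ 2 - (1-φ ω) * (1+φ ω+φ ω ^ 2) * φ ω ^ (2*N+3)) ∂P := by
      intro N
      have e0 := hint_WW 0 (N+3) (by omega)
      have e1 := hint_WW 1 (N+3) (by omega)
      have e2 := hint_WW 2 (N+3) (by omega)
      have e3 := hint_WW 3 (N+3) (by omega)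
      simp only [Nat.cast_zero, sub_zero, add_zero, Nat.cast_one, Nat.cast_ofNat] at e0 e1 e2 e3
      rw [e0, e1, e2, e3, show N+3+1-0 = N+4 by omega, show N+3+1-1 = N+3 by omega,
        show N+3+1-2 = N+2 by omega, show N+3+1-3 = N+1 by omega]
      have hi0 : Integrable (fun ω => ∑ j ∈ Finset.range (N+4), C j ω * C j ω) P :=
        integrable_finset_sum _ (fun j _ => hCCint j j)
      have hi1 : Integrable (fun ω => 2 * ∑ j ∈ Finset.range (N+3), C (j+1) ω * C j ω) P :=
        (integrable_finset_sum _ (fun j _ => hCCint (j+1) j)).const_mul 2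
      have hi2 : Integrable (fun ω => 2 * ∑ j ∈ Finset.range (N+2), C (j+2) ω * C j ω) P :=
        (integrable_finset_sum _ (fun j _ => hCCint (j+2) j)).const_mul 2
      have hi3 : Integrable (fun ω => ∑ j ∈ Finset.range (N+1), C (j+3) ω * C j ω) P :=
        integrable_finset_sum _ (fun j _ => hCCint (j+3) j)
      have hptw : ∫ ω, σ ω ^ 2 * (φ ω ^ 2 - (1-φ ω) * (1+φ ω+φ ω ^ 2) * φ ω ^ (2*N+3)) ∂P
          = ∫ ω, ((∑ j ∈ Finset.range (N+4), C j ω * C j ω)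
              + 2 * (∑ j ∈ Finset.range (N+3), C (j+1) ω * C j ω)
              + 2 * (∑ j ∈ Finset.range (N+2), C (j+2) ω * C j ω)
              + ∑ j ∈ Finset.range (N+1), C (j+3) ω * C j ω) ∂P :=
        integral_congr_ae (Filter.Eventually.of_forall fun ω => by
          simp only [hCdef]
          exact (HetAR1.comboB (φ ω) (σ ω) N).symm)
      have hi01 : Integrable (fun ω => (∑ j ∈ Finset.range (N+4), C j ω * C j ω)
          + 2 * ∑ j ∈ Finset.range (N+3), C (j+1) ω * C j ω) P := hi0.add hi1
      have hi012 : Integrable (fun ω => (∑ j ∈ Finset.range (N+4), C j ω * C j ω)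
          + 2 * (∑ j ∈ Finset.range (N+3), C (j+1) ω * C j ω)
          + 2 * ∑ j ∈ Finset.range (N+2), C (j+2) ω * C j ω) P := hi01.add hi2
      rw [hptw, integral_add hi012 hi3, integral_add hi01 hi2, integral_add hi0 hi1,
        integral_const_mul (2:ℝ), integral_const_mul (2:ℝ),
        integral_finset_sum _ (fun j _ => hCCint j j),
        integral_finset_sum _ (fun j _ => hCCint (j+1) j),
        integral_finset_sum _ (fun j _ => hCCint (j+2) j),
        integral_finset_sum _ (fun j _ => hCCint (j+3) j)]
    have hlhs : Tendsto (fun N : ℕ => (∫ ω, W t (N+3) ω * W t (N+3) ω ∂P)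
        + 2 * (∫ ω, W t (N+3) ω * W (t-1) (N+3) ω ∂P)
        + 2 * (∫ ω, W t (N+3) ω * W (t-2) (N+3) ω ∂P)
        + (∫ ω, W t (N+3) ω * W (t-3) (N+3) ω ∂P)) atTop
        (nhds ((∫ ω, Δy t ω * Δy t ω ∂P) + 2 * (∫ ω, Δy t ω * Δy (t-1) ω ∂P)
          + 2 * (∫ ω, Δy t ω * Δy (t-2) ω ∂P) + (∫ ω, Δy t ω * Δy (t-3) ω ∂P))) :=
      ((((hconv t t).comp (tendsto_add_atTop_nat 3)).add
        (((hconv t (t-1)).comp (tendsto_add_atTop_nat 3)).const_mul 2)).add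
        (((hconv t (t-2)).comp (tendsto_add_atTop_nat 3)).const_mul 2)).add
        ((hconv t (t-3)).comp (tendsto_add_atTop_nat 3))
    have hrhs : Tendsto (fun N : ℕ =>
        ∫ ω, σ ω ^ 2 * (φ ω ^ 2 - (1-φ ω) * (1+φ ω+φ ω ^ 2) * φ ω ^ (2*N+3)) ∂P)
        atTop (nhds (∫ ω, σ ω ^ 2 * φ ω ^ 2 ∂P)) := by
      have hr : ∀ x : ℝ, |x| ≤ 1 → |1+x+x^2| ≤ 4 := by
        intro x hx
        rw [abs_le] at hx ⊢
        constructor <;> nlinarith [sq_nonneg x, sq_nonneg (1+x), sq_nonneg (1-x)]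
      have hrm : Measurable fun x : ℝ => 1+x+x^2 := by fun_prop
      have hσφ2 : Integrable (fun ω => σ ω ^ 2 * φ ω ^ 2) P := by
        refine Integrable.mono' hσ2 ((hσm.pow_const 2).mul
          (hφm.pow_const 2)).aestronglyMeasurable ?_
        filter_upwards [hφabs] with ω h
        rw [Real.norm_eq_abs, abs_mul, abs_pow, abs_pow, sq_abs]
        have : |φ ω| ^ 2 ≤ 1 := pow_le_one₀ (abs_nonneg _) h
        nlinarith [sq_nonneg (σ ω), sq_nonneg (|σ ω|), sq_abs (σ ω)]
      have hsplit : ∀ N : ℕ,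
          ∫ ω, σ ω ^ 2 * (φ ω ^ 2 - (1-φ ω) * (1+φ ω+φ ω ^ 2) * φ ω ^ (2*N+3)) ∂P
          = (∫ ω, σ ω ^ 2 * φ ω ^ 2 ∂P)
            - ∫ ω, σ ω ^ 2 * ((1-φ ω) * (fun x => 1+x+x^2) (φ ω) * φ ω ^ (2*N+3)) ∂P := by
        intro N
        rw [← integral_sub hσφ2 (hremI (fun x => 1+x+x^2) hrm hr _)]
        exact integral_congr_ae (Filter.Eventually.of_forall fun ω => by ring)
      have h0 := hrem (fun x => 1+x+x^2) hrm hr 3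
      have h1 := (tendsto_const_nhds (x := ∫ ω, σ ω ^ 2 * φ ω ^ 2 ∂P) (f := atTop)).sub h0
      rw [sub_zero] at h1
      exact h1.congr fun N => (hsplit N).symm
    exact tendsto_nhds_unique hlhs (hrhs.congr fun N => (heq N).symm)
  -- factorization by independence of φ and σ
  have hfact : ∫ ω, σ ω ^ 2 * φ ω ^ 2 ∂P = (∫ ω, φ ω ^ 2 ∂P) * ∫ ω, σ ω ^ 2 ∂P := by
    have hφ2int : Integrable (fun ω => φ ω ^ 2) P := by
      refine Integrable.mono' (integrable_const 1) ((hφm.pow_const 2).aestronglyMeasurable) ?_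
      filter_upwards [hφabs] with ω h
      rw [Real.norm_eq_abs, abs_pow]
      exact pow_le_one₀ (abs_nonneg _) h
    have hind : IndepFun (fun ω => σ ω ^ 2) (fun ω => φ ω ^ 2) P :=
      hφσ.symm.comp (measurable_id.pow_const 2) (measurable_id.pow_const 2)
    have h1 := hind.integral_fun_mul_eq_mul_integral hσ2.aestronglyMeasurable hφ2int.aestronglyMeasurable
    have h2 : ∫ ω, σ ω ^ 2 * φ ω ^ 2 ∂P = (∫ ω, σ ω ^ 2 ∂P) * ∫ ω, φ ω ^ 2 ∂P := h1
    rw [h2]; ring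
  have hsq : ∫ ω, (Δy t ω) ^ 2 ∂P = ∫ ω, Δy t ω * Δy t ω ∂P :=
    integral_congr_ae (Filter.Eventually.of_forall fun ω => by simp [sq])
  rw [hsq, hγA, hγB, hfact]
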